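/- In the Petersen graph, every edge lies in exactly two perfect matchings, and any two distinct perfect matchings share exactly one edge. -/

import Mathlib

/-- The Petersen graph, presented as the Kneser graph `K(5,2)`: vertices are the
2-element subsets of `Fin 5`, adjacent iff disjoint. -/
def Petersen : SimpleGraph {s : Finset (Fin 5) // s.card = 2} where
  Adj a b := Disjoint a.1 b.1
  symm := ⟨fun a b h => h.symm⟩
  loopless := ⟨fun a h => by
    have h := Finset.disjoint_self_iff_empty _ |>.mp h
    have h2 := a.2
    rw [h] at h2
    simp at h2⟩

abbrev PV := {s : Finset (Fin 5) // s.card = 2}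

instance : DecidableRel Petersen.Adj := fun a b =>
  decidable_of_iff (Disjoint a.1 b.1) Iff.rfl

/-- All perfect-matching edge sets of the Petersen graph. -/
def pmatchings : Finset (Finset (Sym2 PV)) :=
  (Petersen.edgeFinset.powersetCard 5).filter
    (fun E => ∀ v : PV, (E.filter (fun e => v ∈ e)).card = 1)

def pvtx (a b : Fin 5) (h : ({a,b} : Finset (Fin 5)).card = 2 := by decide) : PV := ⟨{a,b}, h⟩

def ped (a b c d : Fin 5) (h1 : ({a,b} : Finset (Fin 5)).card = 2 := by decide)
    (h2 : ({c,d} : Finset (Fin 5)).card = 2 := by decide) : Sym2 PV :=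
  s(pvtx a b h1, pvtx c d h2)

def pmL : List (Finset (Sym2 PV)) :=
  [ {ped 0 1 3 4, ped 0 2 1 4, ped 1 2 0 3, ped 1 3 2 4, ped 2 3 0 4},
    {ped 0 1 3 4, ped 0 2 1 3, ped 1 2 0 4, ped 0 3 2 4, ped 2 3 1 4},
    {ped 0 1 2 4, ped 0 2 3 4, ped 1 2 0 3, ped 1 3 0 4, ped 2 3 1 4},
    {ped 0 1 2 4, ped 0 2 1 3, ped 1 2 3 4, ped 0 3 1 4, ped 2 3 0 4},
    {ped 0 1 2 3, ped 0 2 3 4, ped 1 2 0 4, ped 0 3 1 4, ped 1 3 2 4},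
    {ped 0 1 2 3, ped 0 2 1 4, ped 1 2 3 4, ped 0 3 2 4, ped 1 3 0 4} ]

set_option maxRecDepth 100000 in
theorem pm_eq_L : pmatchings = pmL.toFinset := by decide

set_option maxRecDepth 100000 in
theorem fact1 : ∀ e ∈ Petersen.edgeFinset,
    ((pmL.toFinset).filter (fun E => e ∈ E)).card = 2 := by decide

set_option maxRecDepth 100000 in
theorem fact2 : ∀ i j : Fin 6,
    i ≠ j → ((pmL.get i) ∩ (pmL.get j)).card = 1 := by decide

theorem pmL_length : pmL.length = 6 := by decide

/-- The subgraph determined by an edge set. -/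
def mkSub (E : Finset (Sym2 PV)) : Petersen.Subgraph where
  verts := Set.univ
  Adj a b := s(a,b) ∈ E ∧ Petersen.Adj a b
  adj_sub h := h.2
  edge_vert _ := Set.mem_univ _
  symm := ⟨fun a b h => ⟨by rw [Sym2.eq_swap]; exact h.1, h.2.symm⟩⟩

lemma mem_pm_subset {E : Finset (Sym2 PV)} (h : E ∈ pmatchings) :
    E ⊆ Petersen.edgeFinset :=
  (Finset.mem_powersetCard.mp (Finset.mem_filter.mp h).1).1

lemma edgeSet_mkSub {E : Finset (Sym2 PV)} (hE : E ⊆ Petersen.edgeFinset) :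
    (mkSub E).edgeSet = ↑E := by
  ext e
  induction e using Sym2.ind with
  | _ a b =>
    simp only [SimpleGraph.Subgraph.mem_edgeSet, Finset.mem_coe]
    constructor
    · exact fun h => h.1
    · intro h
      exact ⟨h, Petersen.mem_edgeSet.mp (SimpleGraph.mem_edgeFinset.mp (hE h))⟩

lemma mkSub_injOn {E E' : Finset (Sym2 PV)} (hE : E ⊆ Petersen.edgeFinset)
    (hE' : E' ⊆ Petersen.edgeFinset) (h : mkSub E = mkSub E') : E = E' := by
  have := congrArg SimpleGraph.Subgraph.edgeSet h
  rw [edgeSet_mkSub hE, edgeSet_mkSub hE'] at this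
  exact_mod_cast this

lemma mkSub_isPM {E : Finset (Sym2 PV)} (h : E ∈ pmatchings) :
    (mkSub E).IsPerfectMatching := by
  have hsub := mem_pm_subset h
  have hcard : ∀ v : PV, (E.filter (fun e => v ∈ e)).card = 1 :=
    (Finset.mem_filter.mp h).2
  constructor
  · intro v _
    obtain ⟨e, he⟩ := Finset.card_eq_one.mp (hcard v)
    have hmem : e ∈ E.filter (fun e => v ∈ e) := he ▸ Finset.mem_singleton_self e
    have heE : e ∈ E := (Finset.mem_filter.mp hmem).1
    have hve : v ∈ e := (Finset.mem_filter.mp hmem).2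
    set w := Sym2.Mem.other hve with hw
    have hspec : s(v, w) = e := Sym2.other_spec hve
    have hadj : Petersen.Adj v w := by
      rw [← Petersen.mem_edgeSet, hspec]
      exact SimpleGraph.mem_edgeFinset.mp (hsub heE)
    refine ⟨w, ⟨hspec ▸ heE, hadj⟩, ?_⟩
    intro y hy
    have : s(v, y) ∈ E.filter (fun e => v ∈ e) :=
      Finset.mem_filter.mpr ⟨hy.1, Sym2.mem_mk_left v y⟩
    rw [he, Finset.mem_singleton] at this
    rw [← hspec] at this
    exact (Sym2.congr_right.mp this)
  · intro v
    exact Set.mem_univ v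

lemma classify {M : Petersen.Subgraph} (hM : M.IsPerfectMatching) :
    ∃ E ∈ pmatchings, M = mkSub E := by
  classical
  set F : Finset (Sym2 PV) := (M.edgeSet.toFinite).toFinset with hF
  have hmemF : ∀ e, e ∈ F ↔ e ∈ M.edgeSet := fun e => Set.Finite.mem_toFinset _
  have hFsub : F ⊆ Petersen.edgeFinset := by
    intro e he
    exact SimpleGraph.mem_edgeFinset.mpr (M.edgeSet_subset ((hmemF e).mp he))
  -- each vertex lies in exactly one edge of F
  have hone : ∀ v : PV, (F.filter (fun e => v ∈ e)).card = 1 := by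
    intro v
    obtain ⟨w, ⟨hwadj, hwuniq⟩⟩ := hM.1 (hM.2 v)
    rw [Finset.card_eq_one]
    refine ⟨s(v, w), ?_⟩
    ext e
    simp only [Finset.mem_filter, Finset.mem_singleton]
    constructor
    · rintro ⟨heF, hve⟩
      have hes : s(v, Sym2.Mem.other hve) = e := Sym2.other_spec hve
      have : M.Adj v (Sym2.Mem.other hve) := by
        rw [← SimpleGraph.Subgraph.mem_edgeSet, hes]
        exact (hmemF e).mp heF
      rw [← hes, hwuniq _ this]
    · rintro rfl
      exact ⟨(hmemF _).mpr (SimpleGraph.Subgraph.mem_edgeSet.mpr hwadj),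
        Sym2.mem_mk_left v w⟩
  -- F has exactly 5 edges, by double counting
  have hcardF : F.card = 5 := by
    have hUnion : F.biUnion (fun e => Finset.univ.filter (fun v : PV => v ∈ e))
        = Finset.univ := by
      ext v
      simp only [Finset.mem_biUnion, Finset.mem_filter, Finset.mem_univ, true_and,
        iff_true]
      have h1 := hone v
      have : (F.filter (fun e => v ∈ e)).Nonempty := by
        rw [← Finset.card_pos, h1]; norm_num
      obtain ⟨e, he⟩ := this
      exact ⟨e, (Finset.mem_filter.mp he).1, (Finset.mem_filter.mp he).2⟩
    have hdisj : ∀ e₁ ∈ F, ∀ e₂ ∈ F, e₁ ≠ e₂ →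
        Disjoint (Finset.univ.filter (fun v : PV => v ∈ e₁))
          (Finset.univ.filter (fun v : PV => v ∈ e₂)) := by
      intro e₁ h₁ e₂ h₂ hne
      rw [Finset.disjoint_left]
      intro v hv₁ hv₂
      have hle : (F.filter (fun e => v ∈ e)).card ≤ 1 := le_of_eq (hone v)
      have he₁ : e₁ ∈ F.filter (fun e => v ∈ e) :=
        Finset.mem_filter.mpr ⟨h₁, (Finset.mem_filter.mp hv₁).2⟩
      have he₂ : e₂ ∈ F.filter (fun e => v ∈ e) :=
        Finset.mem_filter.mpr ⟨h₂, (Finset.mem_filter.mp hv₂).2⟩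
      exact hne (Finset.card_le_one.mp hle _ he₁ _ he₂)
    have hsum := Finset.card_biUnion hdisj
    rw [hUnion] at hsum
    have huniv : (Finset.univ : Finset PV).card = 10 := by decide
    have htwo : ∀ e ∈ F, (Finset.univ.filter (fun v : PV => v ∈ e)).card = 2 := by
      intro e he
      induction e using Sym2.ind with
      | _ a b =>
        have hadj : Petersen.Adj a b :=
          Petersen.mem_edgeSet.mp (SimpleGraph.mem_edgeFinset.mp (hFsub he))
        have : Finset.univ.filter (fun v : PV => v ∈ s(a, b)) = {a, b} := by
          ext v
          simp [Sym2.mem_iff]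
        rw [this, Finset.card_insert_of_notMem (by simpa using hadj.ne),
          Finset.card_singleton]
    rw [huniv, Finset.sum_congr rfl htwo, Finset.sum_const, smul_eq_mul] at hsum
    omega
  have hFmem : F ∈ pmatchings :=
    Finset.mem_filter.mpr ⟨Finset.mem_powersetCard.mpr ⟨hFsub, hcardF⟩, hone⟩
  refine ⟨F, hFmem, ?_⟩
  ext a b
  · simp [mkSub, Set.eq_univ_iff_forall.mpr hM.2 ▸ (Set.mem_univ a), hM.2 a]
  · simp only [mkSub]
    constructor
    · intro h
      exact ⟨(hmemF _).mpr (SimpleGraph.Subgraph.mem_edgeSet.mpr h), M.adj_sub h⟩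
    · intro ⟨h, _⟩
      exact SimpleGraph.Subgraph.mem_edgeSet.mp ((hmemF _).mp h)

/-- Every edge of the Petersen graph lies in exactly two perfect matchings, and
any two distinct perfect matchings share exactly one edge. -/
theorem stmt5 :
    (∀ e ∈ Petersen.edgeSet,
      {M : Petersen.Subgraph | M.IsPerfectMatching ∧ e ∈ M.edgeSet}.ncard = 2) ∧
    (∀ M M' : Petersen.Subgraph, M.IsPerfectMatching → M'.IsPerfectMatching →
      M ≠ M' → (M.edgeSet ∩ M'.edgeSet).ncard = 1) := by
  constructor
  · intro e he
    have hset : {M : Petersen.Subgraph | M.IsPerfectMatching ∧ e ∈ M.edgeSet}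
        = mkSub '' ↑(pmatchings.filter (fun E => e ∈ E)) := by
      ext M
      simp only [Set.mem_setOf_eq, Set.mem_image, Finset.coe_filter,
        Set.mem_setOf_eq, Finset.mem_coe]
      constructor
      · rintro ⟨hpm, hedge⟩
        obtain ⟨E, hE, rfl⟩ := classify hpm
        refine ⟨E, ⟨hE, ?_⟩, rfl⟩
        rwa [edgeSet_mkSub (mem_pm_subset hE), Finset.mem_coe] at hedge
      · rintro ⟨E, ⟨hE, heE⟩, rfl⟩
        exact ⟨mkSub_isPM hE, by rw [edgeSet_mkSub (mem_pm_subset hE)]; exact heE⟩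
    rw [hset, Set.ncard_image_of_injOn, Set.ncard_coe_finset]
    · rw [pm_eq_L] at *
      exact fact1 e (SimpleGraph.mem_edgeFinset.mpr he)
    · intro E₁ h₁ E₂ h₂ h
      have h₁' : E₁ ∈ pmatchings := (Finset.mem_filter.mp (by exact_mod_cast h₁)).1
      have h₂' : E₂ ∈ pmatchings := (Finset.mem_filter.mp (by exact_mod_cast h₂)).1
      exact mkSub_injOn (mem_pm_subset h₁') (mem_pm_subset h₂') h
  · intro M M' hM hM' hne
    obtain ⟨E, hE, rfl⟩ := classify hM
    obtain ⟨E', hE', rfl⟩ := classify hM'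
    have hEL : E ∈ pmL := by
      rw [pm_eq_L] at hE; exact List.mem_toFinset.mp hE
    have hEL' : E' ∈ pmL := by
      rw [pm_eq_L] at hE'; exact List.mem_toFinset.mp hE'
    obtain ⟨i, hi⟩ := List.mem_iff_get.mp hEL
    obtain ⟨j, hj⟩ := List.mem_iff_get.mp hEL'
    have hij : i ≠ j := fun h => hne (by rw [← hi, ← hj, h])
    have hij' : Fin.cast pmL_length i ≠ Fin.cast pmL_length j := by
      intro h
      exact hij (Fin.ext (by simpa using congrArg Fin.val h))
    have key := fact2 (Fin.cast pmL_length i) (Fin.cast pmL_length j) hij'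
    have hgi : pmL.get (Fin.cast pmL_length i) = E := by
      rw [← hi]; exact congrArg pmL.get (Fin.ext rfl)
    have hgj : pmL.get (Fin.cast pmL_length j) = E' := by
      rw [← hj]; exact congrArg pmL.get (Fin.ext rfl)
    rw [edgeSet_mkSub (mem_pm_subset hE), edgeSet_mkSub (mem_pm_subset hE'),
      ← Finset.coe_inter, Set.ncard_coe_finset]
    rw [← hgi, ← hgj]
    exact key
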